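/- Let s_k = sin(kπ/9) for k = 1,2,3,4 and let A' be the 3×3 matrix with rows (0,1,1), (1,1,1), (0,1,2). Then A' · (s₂, s₃, s₄)ᵀ = (s₄/s₁) · (s₂, s₃, s₄)ᵀ; that is, (s₂, s₃, s₄)ᵀ is a right eigenvector of A' with eigenvalue λ = s₄/s₁. -/

import Mathlib

open Real

/-- With `s_k = sin(kπ/9)` and `A'` the 3×3 matrix with rows `(0,1,1), (1,1,1),
(0,1,2)`, the vector `(s₂, s₃, s₄)ᵀ` is a right eigenvector of `A'` with
eigenvalue `λ = s₄/s₁`. -/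
theorem dual_matrix_right_eigenvector (s : ℕ → ℝ)
    (hs : ∀ k, s k = Real.sin ((k : ℝ) * π / 9)) :
    Matrix.mulVec !![(0 : ℝ), 1, 1; 1, 1, 1; 0, 1, 2] ![s 2, s 3, s 4] =
      (s 4 / s 1) • ![s 2, s 3, s 4] := by
  set θ : ℝ := π / 9 with hθ
  set t : ℝ := Real.sin θ with htt
  set c : ℝ := Real.cos θ with hcc
  have ht : s 1 = t := by rw [hs]; norm_num [hθ]; rfl
  have hpos : 0 < t := by
    apply Real.sin_pos_of_pos_of_lt_pi
    · positivity
    · rw [hθ]; linarith [pi_pos]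
  have htne : t ≠ 0 := ne_of_gt hpos
  have hp : t ^ 2 + c ^ 2 = 1 := Real.sin_sq_add_cos_sq θ
  have h3 : 4 * c ^ 3 - 3 * c = 1 / 2 := by
    have h : Real.cos (3 * θ) = 1 / 2 := by
      rw [hθ]
      have h9 : 3 * (π / 9) = π / 3 := by ring
      rw [h9, Real.cos_pi_div_three]
    rw [Real.cos_three_mul] at h
    linarith
  have h2s : s 2 = 2 * t * c := by
    rw [hs]
    have h2 : (2 : ℕ) * (π : ℝ) / 9 = 2 * θ := by rw [hθ]; push_cast; ring
    rw [h2, Real.sin_two_mul]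
  have h3s : s 3 = 3 * t - 4 * t ^ 3 := by
    rw [hs]
    have h2 : (3 : ℕ) * (π : ℝ) / 9 = 3 * θ := by rw [hθ]; push_cast; ring
    rw [h2, Real.sin_three_mul]
  have h4s : s 4 = 2 * (2 * t * c) * (2 * c ^ 2 - 1) := by
    rw [hs]
    have h2 : (4 : ℕ) * (π : ℝ) / 9 = 2 * (2 * θ) := by rw [hθ]; push_cast; ring
    rw [h2, Real.sin_two_mul, Real.sin_two_mul, Real.cos_two_mul]
  funext i
  fin_cases i <;>
    simp only [Matrix.mulVec, dotProduct, Fin.sum_univ_three, Matrix.cons_val',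
      Matrix.cons_val_zero, Matrix.cons_val_one, Matrix.head_cons, Matrix.empty_val',
      Matrix.cons_val_fin_one, Matrix.head_fin_const, Pi.smul_apply, Matrix.cons_val_two,
      Matrix.tail_cons, smul_eq_mul, Fin.isValue, Matrix.of_apply, Fin.reduceFinMk] <;>
    rw [ht, h2s, h3s, h4s] <;>
    field_simp
  · linear_combination (-4) * hp + (2 - 4*c) * h3
  · linear_combination (32*c^3 - 16*c - 4) * hp + (2 - 8*c^2) * h3
  · linear_combination (-4) * hp + (2 + 4*c - 16*c^3) * h3
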